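/- Let m ≥ 1 and let ∞ > s₁ ≥ s₂ ≥ ⋯ ≥ s_m ≥ 0 be real numbers. Then ∏_{k=1}^{m} s_k e^{−s_k²/2} · ∏_{1≤j<k≤m} (s_j² − s_k²) · [ ∫_{s₁}^{∞} dt₁ ∫_{s₂}^{s₁} dt₂ ⋯ ∫_{s_m}^{s_{m−1}} dt_m ∫_{0}^{s_m} dt_{m+1} ∏_{k=1}^{m+1} e^{−t_k²/2} · ∏_{1≤j<k≤m+1} (t_j² − t_k²) ] = √(π/2) · ∏_{k=1}^{m} s_k² e^{−s_k²} · ∏_{1≤j<k≤m} (s_j² − s_k²)². -/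

import Mathlib

open MeasureTheory

namespace GaussOdd

open Real Set Filter Finset

noncomputable def phi (k : ℕ) (t : ℝ) : ℝ := t ^ k * Real.exp (-t ^ 2 / 2)

lemma integrable_phi (k : ℕ) : Integrable (phi k) := by
  have h := integrable_rpow_mul_exp_neg_mul_sq (b := 1/2) (by norm_num) (s := (k : ℝ))
    (lt_of_lt_of_le (by norm_num) (Nat.cast_nonneg k))
  unfold phi
  convert h using 2 with t
  rw [Real.rpow_natCast]
  ring_nf

noncomputable def g (k : ℕ) (x : ℝ) : ℝ := ∫ t in Set.Ioi x, phi k t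

lemma g_zero_zero : g 0 0 = Real.sqrt (Real.pi / 2) := by
  have h := integral_gaussian_Ioi (1/2)
  unfold g phi
  simp only [pow_zero, one_mul]
  calc (∫ t in Set.Ioi (0:ℝ), Real.exp (-t ^ 2 / 2))
      = ∫ t in Set.Ioi (0:ℝ), Real.exp (-(1/2) * t ^ 2) := by
        congr 1; ext t; ring_nf
    _ = Real.sqrt (Real.pi / (1/2)) / 2 := h
    _ = Real.sqrt (Real.pi / 2) := by
        rw [show Real.pi / (1/2) = 4 * (Real.pi / 2) by ring, show (4:ℝ) = 2^2 by norm_num,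
          Real.sqrt_mul (by positivity), Real.sqrt_sq (by norm_num)]
        ring

lemma tendsto_phi (k : ℕ) : Tendsto (phi k) atTop (nhds 0) := by
  have h := Real.tendsto_pow_mul_exp_neg_atTop_nhds_zero k
  apply squeeze_zero' (g := fun x => x ^ k * Real.exp (-x))
  · filter_upwards [eventually_ge_atTop (0:ℝ)] with x hx
    unfold phi; positivity
  · filter_upwards [eventually_ge_atTop (2:ℝ)] with x hx
    unfold phi
    have h0 : (0:ℝ) ≤ x := by linarith
    have : x ≤ x ^ 2 / 2 := by nlinarith
    exact mul_le_mul_of_nonneg_left (by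
      apply Real.exp_le_exp.2; linarith) (by positivity)
  · exact h

lemma g_rec (k : ℕ) (x : ℝ) :
    g (k + 2) x = x ^ (k + 1) * Real.exp (-x ^ 2 / 2) + (k + 1) * g k x := by
  set f : ℝ → ℝ := fun t => -(t ^ (k+1) * Real.exp (-t ^ 2 / 2)) with hf
  have hderiv : ∀ t : ℝ, HasDerivAt f (phi (k+2) t - (k+1) * phi k t) t := by
    intro t
    have h1 : HasDerivAt (fun t : ℝ => -t ^ 2 / 2) (-t) t := by
      have := ((hasDerivAt_pow 2 t).neg).div_const 2
      simpa using this.congr_deriv (by ring)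
    have h2 := h1.exp
    have h3 := (hasDerivAt_pow (k+1) t).mul h2
    have h4 := h3.neg
    refine h4.congr_deriv ?_
    unfold phi
    push_cast
    ring
  have hcont : ContinuousWithinAt f (Set.Ici x) x := (hderiv x).continuousAt.continuousWithinAt
  have hint : IntegrableOn (fun t => phi (k+2) t - (k+1) * phi k t) (Set.Ioi x) :=
    ((integrable_phi (k+2)).sub ((integrable_phi k).const_mul _)).integrableOn
  have htend : Tendsto f atTop (nhds 0) := by
    have := (tendsto_phi (k+1)).neg; rw [neg_zero] at this; exact this
  have key := integral_Ioi_of_hasDerivAt_of_tendsto hcont (fun t _ => hderiv t) hint htend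
  have hsub : ∫ t in Set.Ioi x, (phi (k+2) t - (k+1) * phi k t)
      = g (k+2) x - (k+1) * g k x := by
    rw [integral_sub ((integrable_phi (k+2)).integrableOn)
      (((integrable_phi k).const_mul _).integrableOn), MeasureTheory.integral_const_mul]
    rfl
  rw [hsub] at key
  have : f x = -(x ^ (k+1) * Real.exp (-x ^ 2 / 2)) := rfl
  rw [this] at key
  linarith [key]

lemma integral_Ioo_phi (k : ℕ) {a b : ℝ} (hab : a ≤ b) :
    ∫ t in Set.Ioo a b, phi k t = g k a - g k b := by
  rcases eq_or_lt_of_le hab with rfl | h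
  · simp [g]
  · have hu : Set.Ioo a b ∪ Set.Ici b = Set.Ioi a := Set.Ioo_union_Ici_eq_Ioi h
    have hd : Disjoint (Set.Ioo a b) (Set.Ici b) := by
      apply Set.disjoint_left.2
      rintro x ⟨_, h2⟩ h3
      exact absurd h3 (not_le.2 h2)
    have := setIntegral_union hd measurableSet_Ici ((integrable_phi k).integrableOn)
      ((integrable_phi k).integrableOn)
    rw [hu] at this
    have hIci : ∫ t in Set.Ici b, phi k t = g k b := by
      rw [integral_Ici_eq_integral_Ioi]; rfl
    have h2 : g k a = (∫ t in Set.Ioo a b, phi k t) + g k b := by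
      rw [← hIci]; exact this
    linarith

lemma indicator_det {n : ℕ} (S : Fin n → Set ℝ) (f : Fin n → ℝ → ℝ) (t : Fin n → ℝ) :
    (Set.univ.pi S).indicator (fun t => Matrix.det (Matrix.of fun i k => f k (t i))) t
      = Matrix.det (Matrix.of fun i k => (S i).indicator (f k) (t i)) := by
  by_cases h : t ∈ Set.univ.pi S
  · rw [Set.indicator_of_mem h]
    congr 1
    ext i k
    simp only [Matrix.of_apply]
    rw [Set.indicator_of_mem (h i (Set.mem_univ i))]
  · rw [Set.indicator_of_notMem h]
    rw [Set.mem_pi] at h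
    push_neg at h
    obtain ⟨i0, _, hi0⟩ := h
    symm
    apply Matrix.det_eq_zero_of_row_eq_zero i0
    intro k
    simp only [Matrix.of_apply]
    exact Set.indicator_of_notMem hi0 _

lemma integral_pi_det {n : ℕ} (S : Fin n → Set ℝ) (hS : ∀ i, MeasurableSet (S i))
    (f : Fin n → ℝ → ℝ) (hf : ∀ k, Integrable (f k)) :
    (∫ t in Set.univ.pi S, Matrix.det (Matrix.of fun i k => f k (t i)))
      = Matrix.det (Matrix.of fun i k => ∫ x in S i, f k x) := by
  have hind : ∀ k i, Integrable ((S i).indicator (f k)) :=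
    fun k i => ((hf k).integrableOn (s := S i)).integrable_indicator (hS i)
  rw [← integral_indicator (MeasurableSet.univ_pi hS)]
  simp_rw [indicator_det]
  rw [Matrix.det_apply' (Matrix.of fun i k => ∫ x in S i, f k x)]
  have hterm : ∀ σ : Equiv.Perm (Fin n),
      (∫ t : Fin n → ℝ, ∏ i, (S (σ i)).indicator (f i) (t (σ i)))
        = ∏ i, ∫ x in S (σ i), f i x := by
    intro σ
    have h1 : ∀ t : Fin n → ℝ, (∏ i, (S (σ i)).indicator (f i) (t (σ i)))
        = ∏ j, (S j).indicator (f (σ.symm j)) (t j) := by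
      intro t
      rw [← Equiv.prod_comp σ (fun j => (S j).indicator (f (σ.symm j)) (t j))]
      simp
    simp_rw [h1]
    rw [MeasureTheory.integral_fintype_prod_volume_eq_prod
      (f := fun j (x : ℝ) => (S j).indicator (f (σ.symm j)) x)]
    rw [← Equiv.prod_comp σ (fun j => ∫ x : ℝ, (S j).indicator (f (σ.symm j)) x)]
    apply Finset.prod_congr rfl
    intro i _
    rw [integral_indicator (hS (σ i))]
    simp
  calc (∫ t : Fin n → ℝ, Matrix.det (Matrix.of fun i k => (S i).indicator (f k) (t i)))
      = ∫ t : Fin n → ℝ, ∑ σ : Equiv.Perm (Fin n),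
          (Equiv.Perm.sign σ : ℤ) * ∏ i, (S (σ i)).indicator (f i) (t (σ i)) := by
        congr 1; ext t
        rw [Matrix.det_apply']
        apply Finset.sum_congr rfl
        intro σ _
        rfl
    _ = ∑ σ : Equiv.Perm (Fin n),
          (Equiv.Perm.sign σ : ℤ) * ∏ i, ∫ x in S (σ i), f i x := by
        rw [integral_finset_sum]
        · apply Finset.sum_congr rfl
          intro σ _
          rw [integral_const_mul, hterm σ]
        · intro σ _
          apply Integrable.const_mul
          have : Integrable (fun t : Fin n → ℝ =>
              ∏ j, (S j).indicator (f (σ.symm j)) (t j)) :=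
            Integrable.fintype_prod (fun j => hind (σ.symm j) j)
          apply this.congr
          filter_upwards with t
          rw [← Equiv.prod_comp σ (fun j => (S j).indicator (f (σ.symm j)) (t j))]
          simp
    _ = ∑ σ : Equiv.Perm (Fin n), Equiv.Perm.sign σ •
          ∏ i, (Matrix.of fun i k => ∫ x in S i, f k x) (σ i) i := by
        apply Finset.sum_congr rfl
        intro σ _
        simp [Matrix.of_apply, Units.smul_def, zsmul_eq_mul]
    _ = _ := by
        apply Finset.sum_congr rfl
        intro σ _
        simp [Units.smul_def, zsmul_eq_mul]

lemma L1 (m : ℕ) (F : ℕ → ℝ) :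
    (∏ i : Fin m, F ((i : ℕ) + 1)) = ∏ k ∈ Finset.Icc 1 m, F k := by
  rw [Fin.prod_univ_eq_prod_range (fun i => F (i + 1)) m]
  rw [show Finset.Icc 1 m = Finset.Ico 1 (m + 1) by rfl]
  rw [Finset.prod_Ico_eq_prod_range]
  simp [Nat.add_comm]

lemma L2 (m : ℕ) (F : ℕ → ℕ → ℝ) :
    (∏ i : Fin m, ∏ j ∈ Finset.Ioi i, F ((i : ℕ) + 1) ((j : ℕ) + 1))
      = ∏ k ∈ Finset.Icc 1 m, ∏ j ∈ Finset.Ico 1 k, F j k := by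
  rw [Finset.prod_comm' (s' := fun j => Finset.Iio j) (t' := Finset.univ)
    (by intro x y; simp [Finset.mem_Ioi, Finset.mem_Iio])]
  have inner : ∀ j : Fin m, (∏ i ∈ Finset.Iio j, F ((i : ℕ) + 1) ((j : ℕ) + 1))
      = ∏ i ∈ Finset.range (j : ℕ), F (i + 1) ((j : ℕ) + 1) := by
    intro j
    rw [← Nat.Iio_eq_range, ← Fin.map_valEmbedding_Iio, Finset.prod_map]
    rfl
  simp_rw [inner]
  rw [Fin.prod_univ_eq_prod_range (fun j => ∏ i ∈ Finset.range j, F (i + 1) (j + 1)) m]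
  rw [show Finset.Icc 1 m = Finset.Ico 1 (m + 1) by rfl]
  rw [Finset.prod_Ico_eq_prod_range]
  apply Finset.prod_congr (by simp) fun k _ => ?_
  rw [show 1 + k = k + 1 by ring]
  rw [show Finset.Ico 1 (k+1) = Finset.Icc 1 k by rfl,
    show Finset.Icc 1 k = Finset.Ico 1 (k+1) by rfl,
    Finset.prod_Ico_eq_prod_range]
  simp [Nat.add_comm]

noncomputable def eps (m : ℕ) : ℝ := ∏ i : Fin m, ∏ _j ∈ Finset.Ioi i, (-1 : ℝ)

lemma eps_succ (m : ℕ) : eps (m + 1) = (-1) ^ m * eps m := by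
  unfold eps
  rw [Fin.prod_univ_castSucc]
  have h1 : ∀ i : Fin m, (∏ _j ∈ Finset.Ioi (Fin.castSucc i), (-1 : ℝ))
      = (-1) * ∏ _j ∈ Finset.Ioi i, (-1 : ℝ) := by
    intro i
    rw [Finset.prod_const, Finset.prod_const, Fin.card_Ioi, Fin.card_Ioi]
    rw [show (m + 1) - 1 - ((Fin.castSucc i : Fin (m+1)) : ℕ) = (m - 1 - (i:ℕ)) + 1 by
      simp [Fin.castSucc]; omega]
    ring
  simp_rw [h1]
  rw [Finset.prod_mul_distrib, Finset.prod_const]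
  simp [Fin.last]
  try ring

lemma eps_sq (m : ℕ) : eps m * eps m = 1 := by
  unfold eps
  rw [← Finset.prod_mul_distrib]
  apply Finset.prod_eq_one
  intro i _
  rw [← Finset.prod_mul_distrib]
  exact Finset.prod_eq_one (by intros; norm_num)

lemma sign_cancel (m : ℕ) : eps (m + 1) * ((-1) ^ m * eps m) = 1 := by
  rw [eps_succ]
  have h2 : ((-1 : ℝ) ^ m) * ((-1 : ℝ) ^ m) = 1 := by
    rw [← pow_add, Even.neg_one_pow ⟨m, by ring⟩]
  nlinarith [eps_sq m]

lemma det_telescope {n : ℕ} (M B : Matrix (Fin (n+1)) (Fin (n+1)) ℝ)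
    (hM : ∀ i k : Fin (n+1), M i k =
      if (i:ℕ) = 0 then B i k else B i k - B ⟨(i:ℕ) - 1, by omega⟩ k) :
    M.det = B.det := by
  set L : Matrix (Fin (n+1)) (Fin (n+1)) ℝ :=
    Matrix.of fun i j => (if i = j then (1:ℝ) else 0) - (if (j:ℕ) + 1 = (i:ℕ) then 1 else 0)
      with hL
  have hML : M = L * B := by
    ext i k
    rw [Matrix.mul_apply]
    simp only [hL, Matrix.of_apply, sub_mul, ite_mul, one_mul, zero_mul]
    rw [Finset.sum_sub_distrib, Finset.sum_ite_eq Finset.univ i (fun j => B j k)]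
    simp only [Finset.mem_univ, if_true]
    rw [hM i k]
    by_cases hi : (i:ℕ) = 0
    · rw [if_pos hi]
      have : ∀ j : Fin (n+1), (if (j:ℕ) + 1 = (i:ℕ) then B j k else 0) = 0 := by
        intro j; rw [if_neg (by omega)]
      rw [Finset.sum_congr rfl (fun j _ => this j), Finset.sum_const_zero]
      ring
    · rw [if_neg hi]
      have : (∑ j : Fin (n+1), if (j:ℕ) + 1 = (i:ℕ) then B j k else 0)
          = B ⟨(i:ℕ) - 1, by omega⟩ k := by
        rw [Finset.sum_eq_single (⟨(i:ℕ) - 1, by omega⟩ : Fin (n+1))]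
        · rw [if_pos (by simp; omega)]
        · intro j _ hj
          rw [if_neg]
          intro habs
          apply hj
          apply Fin.ext
          simp
          omega
        · intro h; exact absurd (Finset.mem_univ _) h
      rw [this]
  have hdetL : L.det = 1 := by
    have ht : L.BlockTriangular OrderDual.toDual := by
      intro i j hij
      simp only [hL, Matrix.of_apply]
      have : i < j := hij
      rw [if_neg (by omega), if_neg (by omega)]
      ring
    rw [Matrix.det_of_lowerTriangular L ht]
    apply Finset.prod_eq_one
    intro i _
    simp only [hL, Matrix.of_apply]
    rw [if_neg (show ¬((i:ℕ) + 1 = (i:ℕ)) by omega)]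
    simp
  rw [hML, Matrix.det_mul, hdetL, one_mul]

lemma det_colexpand {n : ℕ} (B C : Matrix (Fin n) (Fin n) ℝ) (c : ℕ → ℕ → ℝ)
    (hc : ∀ k, c k k = 1)
    (hB : ∀ i k : Fin n, B i k =
      ∑ l : Fin n, (if (l:ℕ) ≤ (k:ℕ) then c (l:ℕ) (k:ℕ) else 0) * C i l) :
    B.det = C.det := by
  set U : Matrix (Fin n) (Fin n) ℝ :=
    Matrix.of fun l k => if (l:ℕ) ≤ (k:ℕ) then c (l:ℕ) (k:ℕ) else 0 with hU
  have hBU : B = C * U := by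
    ext i k
    rw [Matrix.mul_apply, hB i k]
    apply Finset.sum_congr rfl
    intro l _
    simp only [hU, Matrix.of_apply]
    ring
  have hdetU : U.det = 1 := by
    have ht : U.BlockTriangular id := by
      intro l k hlk
      simp only [hU, Matrix.of_apply]
      have : (k:ℕ) < (l:ℕ) := hlk
      rw [if_neg (by omega)]
    rw [Matrix.det_of_upperTriangular ht]
    apply Finset.prod_eq_one
    intro l _
    simp only [hU, Matrix.of_apply]
    rw [if_pos le_rfl, hc]
  rw [hBU, Matrix.det_mul, hdetU, mul_one]

noncomputable def coef (l k : ℕ) : ℝ := ∏ i ∈ Finset.Icc (l+1) k, (2 * (i:ℝ) - 1)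

lemma coef_diag (k : ℕ) : coef k k = 1 := by
  unfold coef
  rw [Finset.Icc_eq_empty (by omega), Finset.prod_empty]

lemma coef_succ (l k : ℕ) (h : l ≤ k) : coef l (k+1) = (2 * ((k:ℝ)+1) - 1) * coef l k := by
  unfold coef
  rw [Finset.prod_Icc_succ_top (by omega)]
  push_cast
  ring

lemma g_expand (k : ℕ) (x : ℝ) : g (2*k) x = ∑ l ∈ Finset.range (k+1),
    coef l k * (if l = 0 then g 0 x else x^(2*l-1) * Real.exp (-x^2/2)) := by
  induction k with
  | zero => simp [coef_diag]
  | succ k ih =>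
    have h2 : 2 * (k+1) = 2*k + 2 := by ring
    have hR : (∑ l ∈ Finset.range (k+1+1), coef l (k+1) *
          (if l = 0 then g 0 x else x^(2*l-1) * Real.exp (-x^2/2)))
        = ((2*(k:ℝ))+1) * (∑ l ∈ Finset.range (k+1), coef l k *
            (if l = 0 then g 0 x else x^(2*l-1) * Real.exp (-x^2/2)))
          + x^(2*k+1) * Real.exp (-x^2/2) := by
      rw [Finset.sum_range_succ, coef_diag, Finset.mul_sum]
      rw [if_neg (show ¬(k+1 = 0) by omega), show 2*(k+1)-1 = 2*k+1 by omega]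
      congr 1
      · apply Finset.sum_congr rfl
        intro l hl
        rw [coef_succ l k (by simp at hl; omega)]
        push_cast
        ring
      · ring
    rw [h2, g_rec (2*k) x, ih, hR]
    push_cast
    ring

end GaussOdd

open MeasureTheory

/-- Gauss case of Theorem 1.1, odd order `n = 2m+1`, at the level of densities:
multiplying the even-indexed factor by the integral of the odd-indexed factor over the
interlacing region gives `√(π/2) ∏ s_k² e^{-s_k²} Δ(s²)²`. -/
theorem gauss_odd_decimation_density (m : ℕ) (hm : 1 ≤ m) (s : ℕ → ℝ)
    (hdec : ∀ i, 1 ≤ i → i < m → s (i + 1) ≤ s i) (hsm : 0 ≤ s m) :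
    (∏ k ∈ Finset.Icc 1 m, s k * Real.exp (-(s k) ^ 2 / 2)) *
      (∏ k ∈ Finset.Icc 1 m, ∏ j ∈ Finset.Ico 1 k, ((s j) ^ 2 - (s k) ^ 2)) *
      (∫ t in {t : Fin (m + 1) → ℝ | ∀ i : Fin (m + 1),
          (if (i : ℕ) < m then s ((i : ℕ) + 1) else 0) < t i ∧
            (0 < (i : ℕ) → t i < s (i : ℕ))},
        (∏ k : Fin (m + 1), Real.exp (-(t k) ^ 2 / 2)) *
          ∏ k : Fin (m + 1), ∏ j ∈ Finset.Iio k, ((t j) ^ 2 - (t k) ^ 2)) =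
    Real.sqrt (Real.pi / 2) *
      (∏ k ∈ Finset.Icc 1 m, (s k) ^ 2 * Real.exp (-(s k) ^ 2)) *
      ∏ k ∈ Finset.Icc 1 m, ∏ j ∈ Finset.Ico 1 k, ((s j) ^ 2 - (s k) ^ 2) ^ 2 := by
  classical
  set p : Fin (m+1) → ℝ := fun i => if (i:ℕ) < m then s ((i:ℕ)+1) else 0 with hp
  set S : Fin (m+1) → Set ℝ :=
    fun i => if (i:ℕ) = 0 then Set.Ioi (s 1) else Set.Ioo (p i) (s (i:ℕ)) with hS
  have hSmeas : ∀ i, MeasurableSet (S i) := by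
    intro i
    rw [hS]
    dsimp only
    split_ifs
    exacts [measurableSet_Ioi, measurableSet_Ioo]
  have hset : {t : Fin (m + 1) → ℝ | ∀ i : Fin (m + 1),
      (if (i : ℕ) < m then s ((i : ℕ) + 1) else 0) < t i ∧
        (0 < (i : ℕ) → t i < s (i : ℕ))} = Set.univ.pi S := by
    ext t
    simp only [Set.mem_setOf_eq, Set.mem_pi, Set.mem_univ, true_implies]
    apply forall_congr'
    intro i
    rw [hS]
    dsimp only
    by_cases h0 : (i:ℕ) = 0
    · have h1 : (i:ℕ) < m := by omega
      rw [if_pos h0, if_pos h1, Set.mem_Ioi, h0]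
      constructor
      · rintro ⟨ha, _⟩; exact ha
      · intro ha; exact ⟨ha, by omega⟩
    · rw [if_neg h0, Set.mem_Ioo, hp]
      dsimp only
      constructor
      · rintro ⟨ha, hb⟩; exact ⟨ha, hb (by omega)⟩
      · rintro ⟨ha, hb⟩; exact ⟨ha, fun _ => hb⟩
  -- rewrite the integrand as a determinant
  have hintg : ∀ t : Fin (m+1) → ℝ,
      ((∏ k : Fin (m + 1), Real.exp (-(t k) ^ 2 / 2)) *
        ∏ k : Fin (m + 1), ∏ j ∈ Finset.Iio k, ((t j) ^ 2 - (t k) ^ 2))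
      = GaussOdd.eps (m+1) *
          Matrix.det (Matrix.of fun i k : Fin (m+1) => GaussOdd.phi (2*(k:ℕ)) (t i)) := by
    intro t
    have hP : (∏ k : Fin (m + 1), ∏ j ∈ Finset.Iio k, ((t j) ^ 2 - (t k) ^ 2))
        = ∏ j : Fin (m+1), ∏ k ∈ Finset.Ioi j, ((t j) ^ 2 - (t k) ^ 2) :=
      Finset.prod_comm' (by intro x y; simp [Finset.mem_Ioi, Finset.mem_Iio, and_comm])
    have hneg : (∏ j : Fin (m+1), ∏ k ∈ Finset.Ioi j, ((t j) ^ 2 - (t k) ^ 2))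
        = GaussOdd.eps (m+1) * ∏ j : Fin (m+1), ∏ k ∈ Finset.Ioi j,
            ((t k) ^ 2 - (t j) ^ 2) := by
      rw [GaussOdd.eps, ← Finset.prod_mul_distrib]
      apply Finset.prod_congr rfl
      intro j _
      rw [← Finset.prod_mul_distrib]
      apply Finset.prod_congr rfl
      intro k _
      ring
    have hvdm : (∏ j : Fin (m+1), ∏ k ∈ Finset.Ioi j, ((t k) ^ 2 - (t j) ^ 2))
        = Matrix.det (Matrix.vandermonde (fun i : Fin (m+1) => (t i) ^ 2)) :=
      (Matrix.det_vandermonde _).symm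
    have hcol : (∏ k : Fin (m + 1), Real.exp (-(t k) ^ 2 / 2)) *
          Matrix.det (Matrix.vandermonde (fun i : Fin (m+1) => (t i) ^ 2))
        = Matrix.det (Matrix.of fun i k : Fin (m+1) => GaussOdd.phi (2*(k:ℕ)) (t i)) := by
      rw [← Matrix.det_mul_column (fun i : Fin (m+1) => Real.exp (-(t i) ^ 2 / 2))]
      congr 1
      ext i k
      simp only [Matrix.of_apply, Matrix.vandermonde_apply]
      rw [GaussOdd.phi, pow_mul]
      ring
    rw [hP, hneg, hvdm, ← hcol]
    ring
  -- the matrices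
  set B : Matrix (Fin (m+1)) (Fin (m+1)) ℝ :=
    Matrix.of fun i k => GaussOdd.g (2*(k:ℕ)) (p i) with hB
  set C : Matrix (Fin (m+1)) (Fin (m+1)) ℝ :=
    Matrix.of fun i k => if (k:ℕ) = 0 then GaussOdd.g 0 (p i)
      else (p i)^(2*(k:ℕ)-1) * Real.exp (-(p i)^2/2) with hC
  have hps : ∀ i : Fin (m+1), (i:ℕ) ≠ 0 → p i ≤ s (i:ℕ) := by
    intro i hi
    rw [hp]
    dsimp only
    split_ifs with h1
    · exact hdec (i:ℕ) (by omega) h1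
    · have : (i:ℕ) = m := by omega
      rw [this]
      exact hsm
  -- value of the integral over each S i
  have hM : ∀ i k : Fin (m+1), (∫ x in S i, GaussOdd.phi (2*(k:ℕ)) x) =
      if (i:ℕ) = 0 then B i k else B i k - B ⟨(i:ℕ) - 1, by omega⟩ k := by
    intro i k
    by_cases h0 : (i:ℕ) = 0
    · rw [if_pos h0, hS]
      dsimp only
      rw [if_pos h0, hB]
      simp only [Matrix.of_apply]
      rw [hp]
      dsimp only
      rw [if_pos (by omega : (i:ℕ) < m), h0]
      rfl
    · rw [if_neg h0, hS]
      dsimp only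
      have hpi1 : ∀ h : (i:ℕ)-1 < m+1, p ⟨(i:ℕ)-1, h⟩ = s (i:ℕ) := by
        intro h
        rw [hp]
        show (if (i:ℕ)-1 < m then s ((i:ℕ)-1 + 1) else 0) = s (i:ℕ)
        rw [if_pos (by omega), show (i:ℕ)-1+1 = (i:ℕ) by omega]
      rw [if_neg h0, GaussOdd.integral_Ioo_phi _ (hps i h0), hB]
      simp only [Matrix.of_apply]
      rw [hpi1 _]
  have hdetMB : (Matrix.of fun i k : Fin (m+1) =>
      ∫ x in S i, GaussOdd.phi (2*(k:ℕ)) x).det = B.det := by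
    apply GaussOdd.det_telescope
    intro i k
    simp only [Matrix.of_apply]
    exact hM i k
  have hdetBC : B.det = C.det := by
    apply GaussOdd.det_colexpand B C GaussOdd.coef GaussOdd.coef_diag
    intro i k
    rw [hB]
    simp only [Matrix.of_apply]
    rw [GaussOdd.g_expand (k:ℕ) (p i)]
    have hfin : (∑ l : Fin (m+1), (if (l:ℕ) ≤ (k:ℕ) then GaussOdd.coef (l:ℕ) (k:ℕ) else 0) *
          C i l)
        = ∑ l ∈ Finset.range (m+1), (if l ≤ (k:ℕ) then GaussOdd.coef l (k:ℕ) else 0) *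
            (if l = 0 then GaussOdd.g 0 (p i)
              else (p i)^(2*l-1) * Real.exp (-(p i)^2/2)) := by
      rw [← Fin.sum_univ_eq_sum_range (fun l => (if l ≤ (k:ℕ) then GaussOdd.coef l (k:ℕ)
        else 0) * (if l = 0 then GaussOdd.g 0 (p i)
          else (p i)^(2*l-1) * Real.exp (-(p i)^2/2))) (m+1)]
      apply Finset.sum_congr rfl
      intro l _
      rw [hC]
      simp only [Matrix.of_apply]
    rw [hfin]
    rw [← Finset.sum_subset (Finset.range_subset_range.2 (show (k:ℕ)+1 ≤ m+1 by omega))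
      (fun x hx1 hx2 => by
        simp only [Finset.mem_range] at hx1 hx2
        rw [if_neg (by omega), zero_mul])]
    apply Finset.sum_congr rfl
    intro l hl
    simp only [Finset.mem_range] at hl
    rw [if_pos (show l ≤ (k:ℕ) by omega)]
  -- cofactor expansion of C along the last row
  set D : Matrix (Fin m) (Fin m) ℝ :=
    Matrix.of fun i k => (s ((i:ℕ)+1) * Real.exp (-(s ((i:ℕ)+1))^2/2)) *
      ((s ((i:ℕ)+1))^2)^(k:ℕ) with hD
  have hplast : p (Fin.last m) = 0 := by
    rw [hp]
    dsimp only
    rw [if_neg (by simp)]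
  have hdetCD : C.det = (-1)^m * (Real.sqrt (Real.pi/2) * D.det) := by
    rw [Matrix.det_succ_row C (Fin.last m)]
    rw [Finset.sum_eq_single (0 : Fin (m+1))]
    · have hC0 : C (Fin.last m) 0 = Real.sqrt (Real.pi/2) := by
        rw [hC]
        simp only [Matrix.of_apply]
        rw [if_pos (show ((0 : Fin (m+1)):ℕ) = 0 from rfl), hplast, GaussOdd.g_zero_zero]
      have hsub : C.submatrix (Fin.last m).succAbove (0 : Fin (m+1)).succAbove = D := by
        ext i k
        rw [Matrix.submatrix_apply, Fin.succAbove_last, Fin.zero_succAbove, hC]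
        simp only [Matrix.of_apply]
        rw [if_neg (by simp), hD]
        simp only [Matrix.of_apply]
        have hpc : p (Fin.castSucc i) = s ((i:ℕ)+1) := by
          rw [hp]
          dsimp only
          rw [Fin.coe_castSucc, if_pos (by omega)]
        rw [hpc]
        have he : ((Fin.succ k : Fin (m+1)):ℕ) = (k:ℕ)+1 := rfl
        rw [he, show 2*((k:ℕ)+1)-1 = 2*(k:ℕ)+1 by omega]
        have : s ((i:ℕ)+1)^(2*(k:ℕ)+1) = ((s ((i:ℕ)+1))^2)^(k:ℕ) * s ((i:ℕ)+1) := by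
          rw [pow_succ, pow_mul]
        rw [this]
        ring
      rw [hC0, hsub]
      simp only [Fin.last, Fin.val_zero, Nat.add_zero]
      ring
    · intro j _ hj
      have hCj : C (Fin.last m) j = 0 := by
        rw [hC]
        simp only [Matrix.of_apply]
        have hj' : (j:ℕ) ≠ 0 := fun h => hj (Fin.ext h)
        rw [if_neg hj', hplast]
        rw [zero_pow (by omega : 2*(j:ℕ)-1 ≠ 0)]
        ring
      rw [hCj]
      ring
    · intro h
      exact absurd (Finset.mem_univ _) h
  -- evaluate D
  have hdetD : D.det = (∏ i : Fin m, s ((i:ℕ)+1) * Real.exp (-(s ((i:ℕ)+1))^2/2)) *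
      (GaussOdd.eps m * ∏ i : Fin m, ∏ j ∈ Finset.Ioi i,
        ((s ((i:ℕ)+1))^2 - (s ((j:ℕ)+1))^2)) := by
    have h1 : D.det = (∏ i : Fin m, s ((i:ℕ)+1) * Real.exp (-(s ((i:ℕ)+1))^2/2)) *
        Matrix.det (Matrix.vandermonde (fun i : Fin m => (s ((i:ℕ)+1))^2)) := by
      rw [← Matrix.det_mul_column (fun i : Fin m =>
        s ((i:ℕ)+1) * Real.exp (-(s ((i:ℕ)+1))^2/2))]
      congr 1
    rw [h1, Matrix.det_vandermonde]
    congr 1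
    rw [GaussOdd.eps, ← Finset.prod_mul_distrib]
    apply Finset.prod_congr rfl
    intro j _
    rw [← Finset.prod_mul_distrib]
    apply Finset.prod_congr rfl
    intro k _
    ring
  -- compute the full integral
  have hIntegral : (∫ t in {t : Fin (m + 1) → ℝ | ∀ i : Fin (m + 1),
        (if (i : ℕ) < m then s ((i : ℕ) + 1) else 0) < t i ∧
          (0 < (i : ℕ) → t i < s (i : ℕ))},
      (∏ k : Fin (m + 1), Real.exp (-(t k) ^ 2 / 2)) *
        ∏ k : Fin (m + 1), ∏ j ∈ Finset.Iio k, ((t j) ^ 2 - (t k) ^ 2))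
      = GaussOdd.eps (m+1) * ((-1)^m * (Real.sqrt (Real.pi/2) *
          ((∏ i : Fin m, s ((i:ℕ)+1) * Real.exp (-(s ((i:ℕ)+1))^2/2)) *
            (GaussOdd.eps m * ∏ i : Fin m, ∏ j ∈ Finset.Ioi i,
              ((s ((i:ℕ)+1))^2 - (s ((j:ℕ)+1))^2))))) := by
    rw [hset]
    rw [MeasureTheory.setIntegral_congr_fun (MeasurableSet.univ_pi hSmeas)
      (fun t _ => hintg t)]
    rw [MeasureTheory.integral_const_mul]
    have h2 := GaussOdd.integral_pi_det S hSmeas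
      (fun k x => GaussOdd.phi (2*(k:ℕ)) x) (fun k => GaussOdd.integrable_phi _)
    rw [h2, hdetMB, hdetBC, hdetCD, hdetD]
  rw [hIntegral]
  have hPE := GaussOdd.L1 m (fun k => s k * Real.exp (-(s k)^2/2))
  have hT := GaussOdd.L2 m (fun j k => (s j)^2 - (s k)^2)
  rw [hPE, hT]
  have hsign := GaussOdd.sign_cancel m
  have hPE2 : (∏ k ∈ Finset.Icc 1 m, s k * Real.exp (-(s k)^2/2)) *
      (∏ k ∈ Finset.Icc 1 m, s k * Real.exp (-(s k)^2/2))
      = ∏ k ∈ Finset.Icc 1 m, (s k)^2 * Real.exp (-(s k)^2) := by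
    rw [← Finset.prod_mul_distrib]
    apply Finset.prod_congr rfl
    intro k _
    have he : Real.exp (-(s k)^2/2) * Real.exp (-(s k)^2/2) = Real.exp (-(s k)^2) := by
      rw [← Real.exp_add]
      congr 1
      ring
    rw [← he]
    ring
  have hT2 : (∏ k ∈ Finset.Icc 1 m, ∏ j ∈ Finset.Ico 1 k, ((s j)^2 - (s k)^2)) *
      (∏ k ∈ Finset.Icc 1 m, ∏ j ∈ Finset.Ico 1 k, ((s j)^2 - (s k)^2))
      = ∏ k ∈ Finset.Icc 1 m, ∏ j ∈ Finset.Ico 1 k, ((s j)^2 - (s k)^2)^2 := by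
    rw [← Finset.prod_mul_distrib]
    apply Finset.prod_congr rfl
    intro k _
    rw [← Finset.prod_mul_distrib]
    apply Finset.prod_congr rfl
    intro j _
    ring
  calc (∏ k ∈ Finset.Icc 1 m, s k * Real.exp (-(s k) ^ 2 / 2)) *
        (∏ k ∈ Finset.Icc 1 m, ∏ j ∈ Finset.Ico 1 k, ((s j) ^ 2 - (s k) ^ 2)) *
        (GaussOdd.eps (m+1) * ((-1)^m * (Real.sqrt (Real.pi/2) *
          ((∏ k ∈ Finset.Icc 1 m, s k * Real.exp (-(s k)^2/2)) *
            (GaussOdd.eps m * ∏ k ∈ Finset.Icc 1 m, ∏ j ∈ Finset.Ico 1 k,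
              ((s j)^2 - (s k)^2))))))
      = (GaussOdd.eps (m+1) * ((-1)^m * GaussOdd.eps m)) * (Real.sqrt (Real.pi/2) *
          (((∏ k ∈ Finset.Icc 1 m, s k * Real.exp (-(s k)^2/2)) *
            (∏ k ∈ Finset.Icc 1 m, s k * Real.exp (-(s k)^2/2))) *
           ((∏ k ∈ Finset.Icc 1 m, ∏ j ∈ Finset.Ico 1 k, ((s j)^2 - (s k)^2)) *
            (∏ k ∈ Finset.Icc 1 m, ∏ j ∈ Finset.Ico 1 k, ((s j)^2 - (s k)^2))))) := by
        ring
    _ = Real.sqrt (Real.pi / 2) *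
        (∏ k ∈ Finset.Icc 1 m, (s k) ^ 2 * Real.exp (-(s k) ^ 2)) *
        ∏ k ∈ Finset.Icc 1 m, ∏ j ∈ Finset.Ico 1 k, ((s j) ^ 2 - (s k) ^ 2) ^ 2 := by
        rw [hsign, hPE2, hT2]
        ring
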